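/- Let X = ℝ with m the Lebesgue measure, and let Γ = { m restricted to [0,ℓ] : ℓ ∈ (0,1] } ⊆ M^+(ℝ). Then AM(Γ) ≤ 1, while every τ_b-open set G ⊆ M^+(ℝ) with Γ ⊆ G satisfies AM(G) ≥ 2. Consequently, AM is not outer regular with respect to τ_b-open (and hence τ_A-open) sets. -/

import Mathlib

open MeasureTheory Filter Topology BoundedContinuousFunction ENNReal NNReal

noncomputable section

namespace AMPaper

variable (X : Type*) [TopologicalSpace X] [MeasurableSpace X]

/-- The topology `τ_b` on the space of finite nonnegative Borel measures:
the weak topology induced by the pairings `μ ↦ ∫ g dμ`, `g ∈ C_b(X)`. -/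
def taub : TopologicalSpace (FiniteMeasure X) :=
  ⨅ g : X →ᵇ ℝ,
    TopologicalSpace.induced (fun μ : FiniteMeasure X => ∫ x, g x ∂(μ : Measure X)) inferInstance

/-- The topology `τ_A` induced by the pairings with functions from `A ⊆ C_b(X)`. -/
def tauA (A : Set (X →ᵇ ℝ)) : TopologicalSpace (FiniteMeasure X) :=
  ⨅ g ∈ A,
    TopologicalSpace.induced (fun μ : FiniteMeasure X => ∫ x, g x ∂(μ : Measure X)) inferInstance

variable {X}

/-- A closed linear sublattice of `C_b(X)`. -/
structure IsClosedSublattice (A : Set (X →ᵇ ℝ)) : Prop where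
  isClosed : IsClosed A
  zero_mem : (0 : X →ᵇ ℝ) ∈ A
  add_mem : ∀ ⦃f g : X →ᵇ ℝ⦄, f ∈ A → g ∈ A → f + g ∈ A
  smul_mem : ∀ (c : ℝ) ⦃f : X →ᵇ ℝ⦄, f ∈ A → c • f ∈ A
  sup_mem : ∀ ⦃f g h : X →ᵇ ℝ⦄, f ∈ A → g ∈ A → (∀ x, h x = max (f x) (g x)) → h ∈ A
  inf_mem : ∀ ⦃f g h : X →ᵇ ℝ⦄, f ∈ A → g ∈ A → (∀ x, h x = min (f x) (g x)) → h ∈ A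

/-- An acceptable subspace of `C_b(X)`: a closed linear sublattice satisfying
the separation property (A2). -/
structure IsAcceptable (A : Set (X →ᵇ ℝ)) extends IsClosedSublattice A : Prop where
  sep : ∀ F : Set X, IsClosed F → ∀ x ∉ F, ∃ g ∈ A,
    (∀ y, 0 ≤ g y) ∧ (∀ y, g y ≤ 1) ∧ g x = 1 ∧ ∀ y ∈ F, g y = 0

/-- A lower semicontinuous `ρ : X → [0,∞]` is admissible for `E` if `∫ ρ dμ ≥ 1` for all `μ ∈ E`. -/
def AdmissibleFun (ρ : X → ℝ≥0∞) (E : Set (FiniteMeasure X)) : Prop :=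
  LowerSemicontinuous ρ ∧ ∀ μ ∈ E, 1 ≤ ∫⁻ x, ρ x ∂(μ : Measure X)

/-- The `M_p` modulus of a family of measures. -/
def Mmod (p : ℝ) (m : Measure X) (E : Set (FiniteMeasure X)) : ℝ≥0∞ :=
  ⨅ (ρ : X → ℝ≥0∞) (_ : AdmissibleFun ρ E), ∫⁻ x, ρ x ^ p ∂m

/-- The continuous modulus `M_{p,c}^A`, with test functions nonnegative elements of `A`. -/
def McMod (p : ℝ) (A : Set (X →ᵇ ℝ)) (m : Measure X) (E : Set (FiniteMeasure X)) : ℝ≥0∞ :=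
  ⨅ (g : X →ᵇ ℝ) (_ : g ∈ A ∧ (∀ x, 0 ≤ g x) ∧
      ∀ μ ∈ E, 1 ≤ ∫⁻ x, ENNReal.ofReal (g x) ∂(μ : Measure X)),
    ∫⁻ x, ENNReal.ofReal (g x) ^ p ∂m

/-- A sequence of lower semicontinuous functions `ρ_j : X → [0,∞]` is an admissible sequence
for `E` if `liminf_j ∫ ρ_j dμ ≥ 1` for all `μ ∈ E`. -/
def AdmissibleSeq (ρ : ℕ → X → ℝ≥0∞) (E : Set (FiniteMeasure X)) : Prop :=
  (∀ j, LowerSemicontinuous (ρ j)) ∧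
    ∀ μ ∈ E, 1 ≤ Filter.liminf (fun j => ∫⁻ x, ρ j x ∂(μ : Measure X)) Filter.atTop

/-- The approximation modulus `AM_p` of a family of measures. -/
def AMmod (p : ℝ) (m : Measure X) (E : Set (FiniteMeasure X)) : ℝ≥0∞ :=
  ⨅ (ρ : ℕ → X → ℝ≥0∞) (_ : AdmissibleSeq ρ E),
    Filter.liminf (fun j => ∫⁻ x, ρ j x ^ p ∂m) Filter.atTop

/-- The continuous approximation modulus `AM_{p,c}^A`. -/
def AMcMod (p : ℝ) (A : Set (X →ᵇ ℝ)) (m : Measure X) (E : Set (FiniteMeasure X)) : ℝ≥0∞ :=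
  ⨅ (g : ℕ → X →ᵇ ℝ) (_ : (∀ j, g j ∈ A ∧ ∀ x, 0 ≤ g j x) ∧
      ∀ μ ∈ E, 1 ≤ Filter.liminf
        (fun j => ∫⁻ x, ENNReal.ofReal (g j x) ∂(μ : Measure X)) Filter.atTop),
    Filter.liminf (fun j => ∫⁻ x, ENNReal.ofReal (g j x) ^ p ∂m) Filter.atTop

/-- The `L^q(m)`-norm of a function `f : X → [0,∞]`. -/
def lqNorm (q : ℝ≥0∞) (m : Measure X) (f : X → ℝ≥0∞) : ℝ≥0∞ :=
  if q = ∞ then essSup f m else (∫⁻ x, f x ^ q.toReal ∂m) ^ (1 / q.toReal)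

variable (X) in
/-- The `p`-content (depending on `p` only through the conjugate exponent `q`):
the supremum of the outer measures `η*(E)` over all plans `η` — finite Borel measures on
`(M^+(X), τ_b)` — whose barycenter `η^#` is absolutely continuous w.r.t. `m` with density
of `L^q(m)`-norm at most `1`. -/
def Ct (q : ℝ≥0∞) (m : Measure X) (E : Set (FiniteMeasure X)) : ℝ≥0∞ :=
  ⨆ (η : @Measure (FiniteMeasure X) (@borel (FiniteMeasure X) (taub X)))
    (_ : η Set.univ < ∞ ∧ ∃ f : X → ℝ≥0∞, Measurable f ∧
      (∀ B : Set X, MeasurableSet B → (∫⁻ μ, (μ : Measure X) B ∂η) = ∫⁻ x in B, f x ∂m) ∧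
      lqNorm q m f ≤ 1),
    η E


lemma my_le_liminf_add (u v : ℕ → ℝ≥0∞) :
    Filter.liminf u Filter.atTop + Filter.liminf v Filter.atTop ≤
      Filter.liminf (fun j => u j + v j) Filter.atTop := by
  have hm : ∀ w : ℕ → ℝ≥0∞, Monotone (fun n => ⨅ i ≥ n, w i) := fun w n m h =>
    le_iInf₂ fun k hk => iInf₂_le k (h.trans hk)
  rw [Filter.liminf_eq_iSup_iInf_of_nat, Filter.liminf_eq_iSup_iInf_of_nat,
    Filter.liminf_eq_iSup_iInf_of_nat, ENNReal.iSup_add_iSup_of_monotone (hm u) (hm v)]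
  exact iSup_mono fun n => le_iInf₂ fun k hk =>
    add_le_add (iInf₂_le k hk) (iInf₂_le k hk)

lemma my_cont_int (g : ℝ →ᵇ ℝ) :
    Continuous fun η : ℝ => ∫ x, g x ∂(volume.restrict (Set.Icc η (1 + η))) := by
  have hint : ∀ a b : ℝ, IntervalIntegrable g volume a b := fun a b =>
    g.continuous.intervalIntegrable a b
  have h2 : Continuous fun η : ℝ => ∫ x in (0:ℝ)..η, g x :=
    intervalIntegral.continuous_primitive hint 0
  have h1 : Continuous fun η : ℝ => ∫ x in (0:ℝ)..(1 + η), g x :=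
    h2.comp (by continuity)
  have key : (fun η : ℝ => ∫ x, g x ∂(volume.restrict (Set.Icc η (1 + η)))) =
      fun η => (∫ x in (0:ℝ)..(1 + η), g x) - ∫ x in (0:ℝ)..η, g x := by
    funext η
    rw [intervalIntegral.integral_interval_sub_left (hint 0 (1 + η)) (hint 0 η),
      intervalIntegral.integral_of_le (by linarith)]
    exact MeasureTheory.integral_Icc_eq_integral_Ioc
  rw [key]
  exact h1.sub h2

lemma my_fin (s : Set ℝ) (h : volume s < ⊤) : IsFiniteMeasure (volume.restrict s) := by
  constructor
  rw [Measure.restrict_apply MeasurableSet.univ, Set.univ_inter]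
  exact h.trans_le le_top

theorem stmt14 :
    AMmod 1 (volume : Measure ℝ)
        {μ : FiniteMeasure ℝ | ∃ ℓ ∈ Set.Ioc (0:ℝ) 1,
          (μ : Measure ℝ) = volume.restrict (Set.Icc 0 ℓ)} ≤ 1 ∧
    (∀ G : Set (FiniteMeasure ℝ), (taub ℝ).IsOpen G →
      {μ : FiniteMeasure ℝ | ∃ ℓ ∈ Set.Ioc (0:ℝ) 1,
        (μ : Measure ℝ) = volume.restrict (Set.Icc 0 ℓ)} ⊆ G →
      2 ≤ AMmod 1 (volume : Measure ℝ) G) ∧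
    AMmod 1 (volume : Measure ℝ)
        {μ : FiniteMeasure ℝ | ∃ ℓ ∈ Set.Ioc (0:ℝ) 1,
          (μ : Measure ℝ) = volume.restrict (Set.Icc 0 ℓ)} <
      ⨅ (G : Set (FiniteMeasure ℝ)) (_ : (taub ℝ).IsOpen G ∧
        {μ : FiniteMeasure ℝ | ∃ ℓ ∈ Set.Ioc (0:ℝ) 1,
          (μ : Measure ℝ) = volume.restrict (Set.Icc 0 ℓ)} ⊆ G),
        AMmod 1 (volume : Measure ℝ) G := by
  set Γ : Set (FiniteMeasure ℝ) := {μ : FiniteMeasure ℝ | ∃ ℓ ∈ Set.Ioc (0:ℝ) 1,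
    (μ : Measure ℝ) = volume.restrict (Set.Icc 0 ℓ)} with hΓ
  -- Part 1
  have part1 : AMmod 1 (volume : Measure ℝ) Γ ≤ 1 := by
    set ρ : ℕ → ℝ → ℝ≥0∞ := fun j =>
      (Set.Ioo (0:ℝ) (((j:ℝ)+1)⁻¹)).indicator (fun _ => ((j:ℝ≥0∞)+1)) with hρ
    have hval : ∀ (j : ℕ) (μ : Measure ℝ), ∫⁻ x, ρ j x ∂μ =
        ((j:ℝ≥0∞)+1) * μ (Set.Ioo (0:ℝ) (((j:ℝ)+1)⁻¹)) := fun j μ =>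
      lintegral_indicator_const measurableSet_Ioo _
    have hone : ∀ j : ℕ, ((j:ℝ≥0∞)+1) * ENNReal.ofReal (((j:ℝ)+1)⁻¹) = 1 := by
      intro j
      have hpos : (0:ℝ) < (j:ℝ)+1 := by positivity
      rw [ENNReal.ofReal_inv_of_pos hpos]
      have : ENNReal.ofReal ((j:ℝ)+1) = (j:ℝ≥0∞)+1 := by
        rw [ENNReal.ofReal_add (by positivity) zero_le_one, ENNReal.ofReal_natCast,
          ENNReal.ofReal_one]
      rw [this]
      exact ENNReal.mul_inv_cancel (by simp) (by simp)
    have hadm : AdmissibleSeq ρ Γ := by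
      constructor
      · intro j
        exact isOpen_Ioo.lowerSemicontinuous_indicator zero_le
      · rintro μ ⟨ℓ, hℓ, hμ⟩
        obtain ⟨N, hN⟩ := exists_nat_gt ℓ⁻¹
        have hev : ∀ᶠ j in atTop, (1:ℝ≥0∞) ≤ ∫⁻ x, ρ j x ∂(μ : Measure ℝ) := by
          filter_upwards [eventually_ge_atTop N] with j hj
          have hle : ((j:ℝ)+1)⁻¹ ≤ ℓ := by
            rw [inv_le_comm₀ (by positivity) hℓ.1]
            have : (N:ℝ) ≤ (j:ℝ) := Nat.cast_le.2 hj
            linarith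
          have hsub : Set.Ioo (0:ℝ) (((j:ℝ)+1)⁻¹) ⊆ Set.Icc 0 ℓ := fun x hx =>
            ⟨hx.1.le, hx.2.le.trans hle⟩
          rw [hval j, hμ, Measure.restrict_apply measurableSet_Ioo,
            Set.inter_eq_left.2 hsub, Real.volume_Ioo, sub_zero, hone j]
        exact le_liminf_of_le (by isBoundedDefault) hev
    refine le_trans (iInf₂_le ρ hadm) ?_
    have : (fun j => ∫⁻ x, ρ j x ^ (1:ℝ) ∂(volume : Measure ℝ)) = fun _ => (1:ℝ≥0∞) := by
      funext j
      simp only [ENNReal.rpow_one]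
      rw [hval j, Real.volume_Ioo, sub_zero, hone j]
    rw [this, liminf_const]
  -- Part 2
  have part2 : ∀ G : Set (FiniteMeasure ℝ), (taub ℝ).IsOpen G → Γ ⊆ G →
      2 ≤ AMmod 1 (volume : Measure ℝ) G := by
    intro G hG hΓG
    have hfin : ∀ a b : ℝ, IsFiniteMeasure (volume.restrict (Set.Icc a b)) := fun a b =>
      my_fin _ (by rw [Real.volume_Icc]; exact ENNReal.ofReal_lt_top)
    set T : ℝ → FiniteMeasure ℝ := fun η =>
      ⟨volume.restrict (Set.Icc η (1+η)), hfin η (1+η)⟩ with hT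
    have hTcont : Continuous[inferInstance, taub ℝ] T := by
      rw [taub]
      refine continuous_iInf_rng.2 fun g => continuous_induced_rng.2 ?_
      exact my_cont_int g
    have hopen : IsOpen (T ⁻¹' G) :=
      @Continuous.isOpen_preimage ℝ (FiniteMeasure ℝ) _ (taub ℝ) T hTcont G hG
    have hT0 : T 0 ∈ Γ := by
      refine ⟨1, ⟨one_pos, le_refl 1⟩, ?_⟩
      show volume.restrict (Set.Icc 0 (1+0)) = volume.restrict (Set.Icc 0 1)
      norm_num
    obtain ⟨ε, hε, hball⟩ := Metric.isOpen_iff.1 hopen 0 (hΓG hT0)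
    set η : ℝ := min (ε/2) 1 with hηdef
    have hηpos : 0 < η := lt_min (by linarith) one_pos
    have hη1 : η ≤ 1 := min_le_right _ _
    have hTη : T η ∈ G := hball (by
      rw [Metric.mem_ball, Real.dist_eq, sub_zero, abs_of_pos hηpos]
      exact lt_of_le_of_lt (min_le_left _ _) (by linarith))
    set ℓ' : ℝ := η/2 with hℓ'def
    have hμ' : (⟨volume.restrict (Set.Icc 0 ℓ'), hfin 0 ℓ'⟩ : FiniteMeasure ℝ) ∈ Γ :=
      ⟨ℓ', ⟨by positivity, by rw [hℓ'def]; linarith⟩, rfl⟩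
    refine le_iInf fun ρ => le_iInf fun hρ => ?_
    have h1 : (1:ℝ≥0∞) ≤ Filter.liminf
        (fun j => ∫⁻ x in Set.Icc 0 ℓ', ρ j x ∂(volume : Measure ℝ)) Filter.atTop := by
      have := hρ.2 _ (hΓG hμ')
      exact this
    have h2 : (1:ℝ≥0∞) ≤ Filter.liminf
        (fun j => ∫⁻ x in Set.Icc η (1+η), ρ j x ∂(volume : Measure ℝ)) Filter.atTop := by
      have := hρ.2 _ hTη
      exact this
    have hdisj : Disjoint (Set.Icc (0:ℝ) ℓ') (Set.Icc η (1+η)) := by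
      rw [Set.disjoint_left]
      rintro x ⟨_, hx2⟩ ⟨hx3, _⟩
      rw [hℓ'def] at hx2
      linarith
    have hptwise : ∀ j, (∫⁻ x in Set.Icc 0 ℓ', ρ j x ∂(volume : Measure ℝ)) +
        (∫⁻ x in Set.Icc η (1+η), ρ j x ∂(volume : Measure ℝ)) ≤
        ∫⁻ x, ρ j x ^ (1:ℝ) ∂(volume : Measure ℝ) := by
      intro j
      simp only [ENNReal.rpow_one]
      rw [← lintegral_union measurableSet_Icc hdisj]
      exact setLIntegral_le_lintegral _ _
    calc (2:ℝ≥0∞) = 1 + 1 := by norm_num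
      _ ≤ _ + _ := add_le_add h1 h2
      _ ≤ Filter.liminf (fun j => (∫⁻ x in Set.Icc 0 ℓ', ρ j x ∂(volume : Measure ℝ)) +
            (∫⁻ x in Set.Icc η (1+η), ρ j x ∂(volume : Measure ℝ))) Filter.atTop :=
          my_le_liminf_add _ _
      _ ≤ Filter.liminf (fun j => ∫⁻ x, ρ j x ^ (1:ℝ) ∂(volume : Measure ℝ)) Filter.atTop :=
          liminf_le_liminf (Eventually.of_forall hptwise)
  refine ⟨part1, part2, ?_⟩
  exact lt_of_le_of_lt part1 (lt_of_lt_of_le one_lt_two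
    (le_iInf fun G => le_iInf fun h => part2 G h.1 h.2))


end AMPaper

end
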